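/- Let d_0 > 0 and for small t > 0 let d_t satisfy sinh(d_t) = cos(t/2) sinh(d_0). Then there exists C_3 > 0 (depending on d_0) such that 1 − tanh(d_t)·coth(d_0) ≥ C_3 t² for all sufficiently small t > 0. -/

import Mathlib

open Real

private lemma stmt13_aux (c S K t : ℝ) (hc : 0 ≤ c) (hc1 : c ≤ 1) (hK : 0 ≤ K)
    (hu : t ^ 2 / 8 ≤ 1 - c ^ 2) (hKC : K * (S ^ 2 + 1) = 1 / 16) :
    c ^ 2 * (S ^ 2 + 1) ≤ (1 - K * t ^ 2) ^ 2 * (c ^ 2 * S ^ 2 + 1) := by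
  have key : 2 * K * t ^ 2 * (c ^ 2 * S ^ 2 + 1) ≤ t ^ 2 / 8 := by
    nlinarith [mul_nonneg (mul_nonneg (mul_nonneg hK (sq_nonneg t)) (sq_nonneg S))
      (by nlinarith : (0:ℝ) ≤ 1 - c ^ 2), sq_nonneg t]
  have h3 : (1 - 2 * K * t ^ 2) * (c ^ 2 * S ^ 2 + 1) ≤
      (1 - K * t ^ 2) ^ 2 * (c ^ 2 * S ^ 2 + 1) := by
    nlinarith [sq_nonneg (K * t ^ 2), sq_nonneg (c * S)]
  nlinarith [key, h3, hu, sq_nonneg (c * S)]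

set_option maxHeartbeats 1000000 in
/-- Let `d₀ > 0` and for small `t > 0` let `d t` satisfy `sinh (d t) = cos (t/2) · sinh d₀`.
Then there exists `C₃ > 0` such that `1 − tanh (d t) · coth d₀ ≥ C₃ t²` for all
sufficiently small `t > 0`.  (Here `coth d₀ = cosh d₀ / sinh d₀`.) -/
theorem stmt13 (d₀ : ℝ) (hd₀ : 0 < d₀) (d : ℝ → ℝ)
    (hd : ∀ t ∈ Set.Ioo (0 : ℝ) π, Real.sinh (d t) = Real.cos (t / 2) * Real.sinh d₀) :
    ∃ C₃ > 0, ∃ t₀ > 0, ∀ t, 0 < t → t < t₀ →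
      C₃ * t ^ 2 ≤ 1 - Real.tanh (d t) * (Real.cosh d₀ / Real.sinh d₀) := by
  have hSpos : 0 < Real.sinh d₀ := Real.sinh_pos_iff.mpr hd₀
  have hCpos : 0 < Real.cosh d₀ := Real.cosh_pos d₀
  have hC1 : 1 ≤ Real.cosh d₀ := Real.one_le_cosh d₀
  have hCS : Real.cosh d₀ ^ 2 = Real.sinh d₀ ^ 2 + 1 := by
    have := Real.cosh_sq_sub_sinh_sq d₀; linarith
  refine ⟨1 / (16 * Real.cosh d₀ ^ 2), by positivity, 1, one_pos, ?_⟩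
  intro t ht0 ht1
  have htπ : t ∈ Set.Ioo (0 : ℝ) π := ⟨ht0, ht1.trans (by linarith [Real.pi_gt_three])⟩
  have ht := hd t htπ
  set S := Real.sinh d₀ with hS
  set C := Real.cosh d₀ with hC
  set c := Real.cos (t / 2) with hc
  have hcpos : 0 < c := by
    apply Real.cos_pos_of_mem_Ioo
    constructor
    · linarith [Real.pi_gt_three]
    · linarith [Real.pi_gt_three]
  have hc1 : c ≤ 1 := Real.cos_le_one _
  set X := Real.cosh (d t) with hX
  have hXpos : 0 < X := Real.cosh_pos (d t)
  have hX2 : X ^ 2 = c ^ 2 * S ^ 2 + 1 := by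
    have h1 := Real.cosh_sq_sub_sinh_sq (d t)
    rw [ht] at h1; nlinarith
  set K : ℝ := 1 / (16 * C ^ 2) with hK
  have hKpos : 0 < K := by positivity
  have hKC : K * (S ^ 2 + 1) = 1 / 16 := by
    rw [hK, ← hCS]; field_simp
  have hsin : t / 2 - (t / 2) ^ 3 / 4 < Real.sin (t / 2) :=
    by have h := Real.sin_gt_sub_cube (x := t / 2) (by linarith); nlinarith [pow_pos (by linarith : (0:ℝ) < t / 2) 3]
  have hpyth : Real.sin (t / 2) ^ 2 + c ^ 2 = 1 := Real.sin_sq_add_cos_sq _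
  have hsinpos : 0 < Real.sin (t / 2) := Real.sin_pos_of_pos_of_lt_pi (by linarith)
    (by linarith [Real.pi_gt_three])
  have hu : t ^ 2 / 8 ≤ 1 - c ^ 2 := by
    have hcube : t ^ 3 ≤ t := by
      nlinarith [mul_nonneg ht0.le (mul_nonneg (by linarith : (0:ℝ) ≤ 1 - t)
        (by linarith : (0:ℝ) ≤ 1 + t))]
    have h1 : (15 / 32 : ℝ) * t ≤ Real.sin (t / 2) := by nlinarith [hsin, hcube]
    nlinarith
  have htanh : Real.tanh (d t) * (C / S) = c * C / X := by
    rw [Real.tanh_eq_sinh_div_cosh, ht, ← hX]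
    field_simp
  clear_value S C c X K
  clear hd ht hsin hpyth hsinpos hS hC hc hX hK
  have hKt : K * t ^ 2 ≤ 1 / 16 := by
    have h2 : t ^ 2 ≤ 1 := by nlinarith
    nlinarith [mul_nonneg hKpos.le (by linarith : (0:ℝ) ≤ 1 - t ^ 2),
      mul_nonneg hKpos.le (sq_nonneg S)]
  have hsq : c ^ 2 * C ^ 2 ≤ ((1 - K * t ^ 2) * X) ^ 2 := by
    have := stmt13_aux c S K t hcpos.le hc1 hKpos.le hu hKC
    rw [hCS]
    calc c ^ 2 * (S ^ 2 + 1) ≤ (1 - K * t ^ 2) ^ 2 * (c ^ 2 * S ^ 2 + 1) := this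
    _ = ((1 - K * t ^ 2) * X) ^ 2 := by rw [mul_pow, hX2]
  have hmain : c * C ≤ (1 - K * t ^ 2) * X := by
    have hrhs : 0 ≤ (1 - K * t ^ 2) * X := mul_nonneg (by linarith) hXpos.le
    nlinarith [mul_pos hcpos hCpos]
  rw [htanh]
  have hfin : c * C / X ≤ 1 - K * t ^ 2 := (div_le_iff₀ hXpos).mpr hmain
  linarith
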